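/- Let G be an abelian group and S a finite generating subset with 0 ∈ S and S ≠ G. Let H be a subgroup of G which is a 1-fragment of S. Then H is faithful (|G \ (H + S)| ≥ |H|) and κ_1(φ_H(S)) = |φ_H(S)| − 1, where φ_H : G → G/H is the canonical morphism. -/

import Mathlib

open Pointwise

variable {G : Type*} [AddCommGroup G]

/-- The boundary of `X` with respect to `S`: `∂(X) = (X + S) \ X`. -/
def bdry (S X : Set G) : Set G := (X + S) \ X

/-- The co-image of `X` with respect to `S`: `∇(X) = G \ (X + S)`. -/
def coimg (S X : Set G) : Set G := (X + S)ᶜ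

/-- `S` is `k`-separable: some finite `X` has `|X| ≥ k` and `|∇(X)| ≥ k`. -/
def IsSep (S : Set G) (k : ℕ) : Prop :=
  ∃ X : Set G, X.Finite ∧ k ≤ X.encard ∧ k ≤ (coimg S X).encard

/-- The `k`-th connectivity `κ_k(S) = min {|∂(X)| : X finite, |X| ≥ k, |∇(X)| ≥ k}`. -/
noncomputable def kappa (S : Set G) (k : ℕ) : ℕ∞ :=
  ⨅ X ∈ {X : Set G | X.Finite ∧ k ≤ X.encard ∧ k ≤ (coimg S X).encard}, (bdry S X).encard

/-- `X` is a `k`-fragment of `S`. -/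
def IsFragment (S X : Set G) (k : ℕ) : Prop :=
  X.Finite ∧ k ≤ X.encard ∧ k ≤ (coimg S X).encard ∧ (bdry S X).encard = kappa S k

/-- `X` is a `k`-atom of `S`: a `k`-fragment of minimum cardinality. -/
def IsAtomK (S X : Set G) (k : ℕ) : Prop :=
  IsFragment S X k ∧ ∀ Y : Set G, IsFragment S Y k → X.encard ≤ Y.encard

section aux
variable (H : AddSubgroup G)

lemma pre_add (Y : Set (G ⧸ H)) (S : Set G) :
    ((QuotientAddGroup.mk : G → G ⧸ H) ⁻¹' Y) + S
      = (QuotientAddGroup.mk : G → G ⧸ H) ⁻¹' (Y + (QuotientAddGroup.mk : G → G ⧸ H) '' S) := by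
  ext g
  constructor
  · rintro ⟨y, hy, s, hs, rfl⟩
    exact ⟨_, hy, _, ⟨s, hs, rfl⟩, rfl⟩
  · rintro ⟨y, hy, t, ⟨s, hs, rfl⟩, hg⟩
    have hg' : y + (s : G ⧸ H) = (g : G ⧸ H) := hg
    refine ⟨g - s, ?_, s, hs, sub_add_cancel g s⟩
    show ((g - s : G) : G ⧸ H) ∈ Y
    have : ((g - s : G) : G ⧸ H) = y := by
      rw [QuotientAddGroup.mk_sub, ← hg']; exact add_sub_cancel_right y _
    rwa [this]

noncomputable def preEquiv (T : Set (G ⧸ H)) :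
    ((QuotientAddGroup.mk : G → G ⧸ H) ⁻¹' T) ≃ T × (H : Set G) where
  toFun g := (⟨_, g.2⟩, ⟨g.1 - ((g.1 : G ⧸ H)).out, by
    rw [SetLike.mem_coe, ← QuotientAddGroup.eq_zero_iff, QuotientAddGroup.mk_sub,
      QuotientAddGroup.out_eq', sub_self]⟩)
  invFun p := ⟨(p.1 : G ⧸ H).out + p.2, by
    show ((_ : G) : G ⧸ H) ∈ T
    rw [QuotientAddGroup.mk_add, (QuotientAddGroup.eq_zero_iff _).2 p.2.2, add_zero,
      QuotientAddGroup.out_eq']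
    exact p.1.2⟩
  left_inv g := by simp
  right_inv p := by
    have h1 : (((p.1 : G ⧸ H).out + (p.2 : G) : G) : G ⧸ H) = p.1 := by
      rw [QuotientAddGroup.mk_add, (QuotientAddGroup.eq_zero_iff _).2 p.2.2, add_zero,
        QuotientAddGroup.out_eq']
    ext
    · exact h1
    · simp only [h1, add_sub_cancel_left]

lemma card_pre (T : Set (G ⧸ H)) :
    Nat.card ((QuotientAddGroup.mk : G → G ⧸ H) ⁻¹' T) = Nat.card T * Nat.card (H : Set G) := by
  rw [Nat.card_congr (preEquiv H T), Nat.card_prod]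

lemma fin_pre (T : Set (G ⧸ H)) (hT : T.Finite) (hHf : (H : Set G).Finite) :
    ((QuotientAddGroup.mk : G → G ⧸ H) ⁻¹' T).Finite := by
  have : Finite T := hT
  have : Finite (H : Set G) := hHf
  have : Finite ((QuotientAddGroup.mk : G → G ⧸ H) ⁻¹' T) := Finite.of_equiv _ (preEquiv H T).symm
  exact Set.toFinite _
end aux

/-- If a subgroup `H` is a `1`-fragment of `S`, then `H` is faithful
and `κ₁(φ_H(S)) = |φ_H(S)| - 1`. -/
theorem stmt_9 (S : Set G) (hfin : S.Finite) (h0 : (0 : G) ∈ S)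
    (hgen : AddSubgroup.closure S = ⊤) (hne : S ≠ Set.univ)
    (H : AddSubgroup G) (hH : IsFragment S (H : Set G) 1) :
    (H : Set G).encard ≤ (coimg S (H : Set G)).encard ∧
      kappa ((QuotientAddGroup.mk : G → G ⧸ H) '' S) 1 =
        ((QuotientAddGroup.mk : G → G ⧸ H) '' S).encard - 1 := by

  obtain ⟨hHfin, hH1, hHc, hHk⟩ := hH
  set φ : G → G ⧸ H := QuotientAddGroup.mk with hφ
  set T : Set (G ⧸ H) := φ '' S with hTdef
  have hpre0 : (H : Set G) = φ ⁻¹' {0} := by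
    ext g
    simp only [Set.mem_preimage, Set.mem_singleton_iff, SetLike.mem_coe, hφ]
    exact (QuotientAddGroup.eq_zero_iff g).symm
  have hzeroadd : ∀ U : Set (G ⧸ H), ({0} : Set (G ⧸ H)) + U = U := by
    intro U; ext x; simp [Set.mem_add]
  have hHS : (H : Set G) + S = φ ⁻¹' T := by
    rw [hpre0, pre_add, hzeroadd]
  have hcoimgH : coimg S (H : Set G) = φ ⁻¹' Tᶜ := by
    rw [coimg, hHS, Set.preimage_compl]
  have hHc' : (coimg S (H : Set G)).Nonempty := by
    rw [← Set.one_le_encard_iff_nonempty]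
    exact_mod_cast hHc
  obtain ⟨a, ha⟩ := hHc'
  have hTc : φ a ∈ Tᶜ := by rw [hcoimgH] at ha; exact ha
  -- Part 1
  have part1 : (H : Set G).encard ≤ (coimg S (H : Set G)).encard := by
    have hsub : (fun h => a + h) '' (H : Set G) ⊆ coimg S (H : Set G) := by
      rintro _ ⟨h, hh, rfl⟩
      rw [hcoimgH]
      show φ (a + h) ∈ Tᶜ
      have : φ (a + h) = φ a := by
        show ((a + h : G) : G ⧸ H) = (a : G ⧸ H)
        rw [QuotientAddGroup.mk_add, (QuotientAddGroup.eq_zero_iff h).2 hh, add_zero]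
      rw [this]; exact hTc
    calc (H : Set G).encard
        = ((fun h => a + h) '' (H : Set G)).encard :=
          ((add_right_injective a).encard_image _).symm
      _ ≤ _ := Set.encard_mono hsub
  -- generic facts
  have hbdryPre : ∀ Y : Set (G ⧸ H), bdry S (φ ⁻¹' Y) = φ ⁻¹' (bdry T Y) := by
    intro Y
    rw [bdry, bdry, pre_add, ← Set.preimage_diff]
  have hcoimgPre : ∀ Y : Set (G ⧸ H), coimg S (φ ⁻¹' Y) = φ ⁻¹' (coimg T Y) := by
    intro Y
    rw [coimg, coimg, pre_add, Set.preimage_compl]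
  have hbdryH : bdry S (H : Set G) = φ ⁻¹' (T \ {0}) := by
    rw [bdry, hHS, hpre0, Set.preimage_diff]
  have hTfin : T.Finite := hfin.image _
  have h0T : (0 : G ⧸ H) ∈ T := ⟨0, h0, by simp [hφ]⟩
  have hTcne : Tᶜ.Nonempty := ⟨φ a, hTc⟩
  -- upper bound
  have hupper : kappa T 1 ≤ T.encard - 1 := by
    have hmem : ({0} : Set (G ⧸ H)) ∈
        {X : Set (G ⧸ H) | X.Finite ∧ (1 : ℕ) ≤ X.encard ∧ (1 : ℕ) ≤ (coimg T X).encard} := by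
      refine ⟨Set.finite_singleton _, ?_, ?_⟩
      · simp
      · rw [coimg, hzeroadd]
        exact_mod_cast Set.one_le_encard_iff_nonempty.2 hTcne
    have hle := iInf₂_le (f := fun X _ => (bdry T X).encard) ({0} : Set (G ⧸ H)) hmem
    rw [kappa]
    refine hle.trans ?_
    rw [bdry, hzeroadd, Set.encard_diff_singleton_of_mem h0T]
  -- lower bound
  have hlower : T.encard - 1 ≤ kappa T 1 := by
    rw [kappa]
    refine le_iInf₂ fun Y hY => ?_
    obtain ⟨hYfin, hY1, hYc⟩ := hY
    by_contra hlt
    push_neg at hlt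
    rw [← Set.encard_diff_singleton_of_mem h0T] at hlt
    set X := φ ⁻¹' Y with hXdef
    have hXfin : X.Finite := fin_pre H Y hYfin hHfin
    have hYne : Y.Nonempty := by
      rw [← Set.one_le_encard_iff_nonempty]; exact_mod_cast hY1
    obtain ⟨y, hy⟩ := hYne
    have hX1 : (1 : ℕ) ≤ X.encard := by
      have : y.out ∈ X := by
        show φ y.out ∈ Y
        rw [hφ]
        rw [QuotientAddGroup.out_eq']
        exact hy
      exact_mod_cast Set.one_le_encard_iff_nonempty.2 ⟨y.out, this⟩
    have hYcne : (coimg T Y).Nonempty := by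
      rw [← Set.one_le_encard_iff_nonempty]; exact_mod_cast hYc
    obtain ⟨z, hz⟩ := hYcne
    have hXc1 : (1 : ℕ) ≤ (coimg S X).encard := by
      have : z.out ∈ coimg S X := by
        rw [hcoimgPre]
        show φ z.out ∈ coimg T Y
        rw [hφ, QuotientAddGroup.out_eq']
        exact hz
      exact_mod_cast Set.one_le_encard_iff_nonempty.2 ⟨z.out, this⟩
    have hk : kappa S 1 ≤ (bdry S X).encard :=
      iInf₂_le (f := fun X _ => (bdry S X).encard) X ⟨hXfin, hX1, hXc1⟩
    have hfinB : (bdry T Y).Finite := (hYfin.add hTfin).subset Set.diff_subset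
    have hfinD : (T \ {0}).Finite := hTfin.diff
    haveI : Finite (H : Set G) := hHfin
    haveI : Nonempty (H : Set G) := ⟨⟨0, zero_mem _⟩⟩
    have hHpos : 0 < Nat.card (H : Set G) := Nat.card_pos
    have hltN : Nat.card (bdry T Y) < Nat.card (T \ {0} : Set (G ⧸ H)) := by
      rw [← hfinB.cast_ncard_eq, ← hfinD.cast_ncard_eq, Nat.cast_lt,
        ← Nat.card_coe_set_eq, ← Nat.card_coe_set_eq] at hlt
      exact hlt
    have h1 : (bdry S X).encard < (bdry S (H : Set G)).encard := by
      rw [hbdryPre Y, hbdryH]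
      have f1 : (φ ⁻¹' (bdry T Y)).Finite := fin_pre H _ hfinB hHfin
      have f2 : (φ ⁻¹' (T \ {0})).Finite := fin_pre H _ hfinD hHfin
      rw [← f1.cast_ncard_eq, ← f2.cast_ncard_eq, Nat.cast_lt,
        ← Nat.card_coe_set_eq, ← Nat.card_coe_set_eq, card_pre, card_pre]
      exact Nat.mul_lt_mul_of_pos_right hltN hHpos
    rw [hHk] at h1
    exact absurd (hk.trans_lt h1) (lt_irrefl _)
  exact ⟨part1, le_antisymm hupper hlower⟩
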